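/- The average-work function M(τ) satisfies lim_{τ → 0⁺} M(τ) = ε p₀, the work output of the corresponding adiabatic process. -/

import Mathlib

open Set Filter

/-- `G_τ(u) = -∑_{n=1}^∞ (-exp(-u/T))^n / (nε/(κτT) + 1)`. -/
noncomputable def Gser (T ε κ τ u : ℝ) : ℝ :=
  -∑' n : ℕ, (-Real.exp (-u / T)) ^ (n + 1) / ((n + 1 : ℝ) * ε / (κ * τ * T) + 1)

/-- The average-work function
`M(τ) = T ln(Z(δmin)/Z(δmax)) + (ε p₀/(κτ))(1 − e^{−κτ}) − (ε/(κτ))(G_τ(δmin) − e^{−κτ} G_τ(δmax))`,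
with `Z(δ) = 1 + exp(−δ/T)` and `ε = δmax − δmin`. -/
noncomputable def Mavg (T δmin δmax κ p₀ τ : ℝ) : ℝ :=
  T * Real.log ((1 + Real.exp (-δmin / T)) / (1 + Real.exp (-δmax / T)))
    + (δmax - δmin) * p₀ / (κ * τ) * (1 - Real.exp (-κ * τ))
    - (δmax - δmin) / (κ * τ) *
        (Gser T (δmax - δmin) κ τ δmin - Real.exp (-κ * τ) * Gser T (δmax - δmin) κ τ δmax)

lemma slope_lim : Tendsto (fun s : ℝ => (1 - Real.exp (-s)) / s) (nhdsWithin 0 (Ioi 0)) (nhds 1) := by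
  have hder : HasDerivAt (fun s : ℝ => 1 - Real.exp (-s)) 1 0 := by
    have h1 : HasDerivAt (fun s : ℝ => Real.exp (-s)) (-1) 0 := by
      simpa [Function.comp_def] using (Real.hasDerivAt_exp (-(0:ℝ))).comp 0 (hasDerivAt_neg 0)
    simpa using h1.const_sub 1
  have h2 := hasDerivAt_iff_tendsto_slope.mp hder
  have h3 : Tendsto (slope (fun s : ℝ => 1 - Real.exp (-s)) 0) (nhdsWithin 0 (Ioi 0)) (nhds 1) :=
    h2.mono_left (nhdsWithin_mono _ (fun s hs => ne_of_gt hs))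
  refine h3.congr' ?_
  filter_upwards [self_mem_nhdsWithin] with s _
  rw [slope_def_field]
  simp [div_eq_inv_mul]

lemma gser_lim (T ε κ u : ℝ) (hT : 0 < T) (hε : 0 < ε) (hκ : 0 < κ) (hu : 0 < u) :
    Tendsto (fun τ => ε / (κ * τ) * Gser T ε κ τ u) (nhdsWithin 0 (Ioi 0))
      (nhds (T * Real.log (1 + Real.exp (-u / T)))) := by
  set x := Real.exp (-u / T) with hxdef
  have hx0 : 0 < x := Real.exp_pos _
  have hx1 : x < 1 := by
    rw [hxdef, Real.exp_lt_one_iff]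
    exact div_neg_of_neg_of_pos (by linarith) hT
  have hsum : HasSum (fun n : ℕ => (-x) ^ (n + 1) / (n + 1)) (-Real.log (1 + x)) := by
    have := Real.hasSum_pow_div_log_of_abs_lt_one (x := -x)
      (by rw [abs_neg, abs_of_pos hx0]; exact hx1)
    simpa [sub_neg_eq_add] using this
  have key : Tendsto
      (fun τ => ∑' n : ℕ, (-x) ^ (n + 1) * (ε * T / ((n + 1 : ℝ) * ε + κ * τ * T)))
      (nhdsWithin 0 (Ioi 0))
      (nhds (∑' n : ℕ, (-x) ^ (n + 1) * (T / (n + 1 : ℝ)))) := by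
    apply tendsto_tsum_of_dominated_convergence (bound := fun n : ℕ => T * x * x ^ n)
    · exact (summable_geometric_of_lt_one hx0.le hx1).mul_left (T * x)
    · intro n
      have hden : Tendsto (fun τ : ℝ => (n + 1 : ℝ) * ε + κ * τ * T)
          (nhdsWithin 0 (Ioi 0)) (nhds ((n + 1 : ℝ) * ε)) := by
        have : Tendsto (fun τ : ℝ => (n + 1 : ℝ) * ε + κ * τ * T) (nhds 0)
            (nhds ((n + 1 : ℝ) * ε + κ * 0 * T)) :=
          tendsto_const_nhds.add ((tendsto_const_nhds.mul tendsto_id).mul tendsto_const_nhds)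
        simpa using this.mono_left nhdsWithin_le_nhds
      have hne : ((n + 1 : ℝ) * ε) ≠ 0 := by positivity
      have h := ((tendsto_const_nhds (x := ε * T)).div hden hne).const_mul ((-x) ^ (n + 1))
      convert h using 2
      have hne1 : ((n:ℝ) + 1) ≠ 0 := by positivity
      simp only [Pi.div_apply]
      field_simp
    · filter_upwards [self_mem_nhdsWithin] with τ hτ
      intro n
      have hτ0 : (0:ℝ) < τ := hτ
      have hden : (0:ℝ) < (n + 1 : ℝ) * ε + κ * τ * T := by positivity
      rw [norm_mul, norm_pow, norm_neg, Real.norm_eq_abs, abs_of_pos hx0,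
        Real.norm_eq_abs, abs_of_pos (by positivity)]
      have hle : ε * T / ((n + 1 : ℝ) * ε + κ * τ * T) ≤ T := by
        rw [div_le_iff₀ hden]
        nlinarith [mul_pos (mul_pos hκ hτ0) hT,
          mul_nonneg (mul_nonneg (Nat.cast_nonneg n) hε.le) hT.le]
      calc x ^ (n + 1) * (ε * T / ((n + 1 : ℝ) * ε + κ * τ * T))
          ≤ x ^ (n + 1) * T := mul_le_mul_of_nonneg_left hle (by positivity)
        _ = T * x * x ^ n := by ring
  have hval : (∑' n : ℕ, (-x) ^ (n + 1) * (T / (n + 1 : ℝ)))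
      = -(T * Real.log (1 + x)) := by
    have h : HasSum (fun n : ℕ => (-x) ^ (n + 1) * (T / (n + 1 : ℝ)))
        (T * -Real.log (1 + x)) := (hsum.mul_left T).congr_fun fun n => by ring
    rw [h.tsum_eq]; ring
  rw [hval] at key
  have key2 := key.neg
  rw [neg_neg] at key2
  refine key2.congr' ?_
  filter_upwards [self_mem_nhdsWithin] with τ hτ
  have hτ0 : (0:ℝ) < τ := hτ
  rw [Gser, mul_neg, ← tsum_mul_left, neg_inj]
  apply tsum_congr
  intro n
  have hκτ : κ * τ ≠ 0 := ne_of_gt (mul_pos hκ hτ0)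
  have hκτT : κ * τ * T ≠ 0 := ne_of_gt (mul_pos (mul_pos hκ hτ0) hT)
  have hden : ((n:ℝ) + 1) * ε + κ * τ * T ≠ 0 := by
    have : (0:ℝ) < ((n:ℝ) + 1) * ε + κ * τ * T := by positivity
    exact ne_of_gt this
  have hden2 : ((n:ℝ) + 1) * ε / (κ * τ * T) + 1 ≠ 0 := by
    have : (0:ℝ) < ((n:ℝ) + 1) * ε / (κ * τ * T) + 1 := by positivity
    exact ne_of_gt this
  simp only [hxdef]
  field_simp

theorem stmt4 (T δmin δmax κ p₀ : ℝ)
    (hT : 0 < T) (hmin : 0 < δmin) (hlt : δmin < δmax) (hκ : 0 < κ)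
    (hp₀ : p₀ ∈ Icc (0 : ℝ) 1) :
    Tendsto (fun τ => Mavg T δmin δmax κ p₀ τ) (nhdsWithin 0 (Ioi 0))
      (nhds ((δmax - δmin) * p₀)) := by
  set ε := δmax - δmin with hεdef
  have hε : 0 < ε := by simp [hεdef]; linarith
  set L : ℝ → ℝ := fun u => T * Real.log (1 + Real.exp (-u / T)) with hL
  -- components
  have hA : Tendsto (fun τ => ε * p₀ / (κ * τ) * (1 - Real.exp (-κ * τ)))
      (nhdsWithin 0 (Ioi 0)) (nhds (ε * p₀)) := by
    have hmap : Tendsto (fun τ : ℝ => κ * τ) (nhdsWithin 0 (Ioi 0)) (nhdsWithin 0 (Ioi 0)) := by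
      have hc : Tendsto (fun τ : ℝ => κ * τ) (nhds 0) (nhds (κ * 0)) :=
        tendsto_const_nhds.mul tendsto_id
      rw [mul_zero] at hc
      have hc' : Tendsto (fun τ : ℝ => κ * τ) (nhdsWithin 0 (Ioi 0)) (nhds 0) :=
        hc.mono_left nhdsWithin_le_nhds
      rw [tendsto_nhdsWithin_iff]
      refine ⟨hc', ?_⟩
      filter_upwards [self_mem_nhdsWithin] with τ hτ
      exact mul_pos hκ hτ
    have h1 := (slope_lim.comp hmap).const_mul (ε * p₀)
    rw [mul_one] at h1
    refine h1.congr' ?_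
    filter_upwards [self_mem_nhdsWithin] with τ hτ
    have hτ0 : (0:ℝ) < τ := hτ
    have : κ * τ ≠ 0 := ne_of_gt (mul_pos hκ hτ0)
    simp only [Function.comp_apply]
    field_simp
  have hB1 := gser_lim T ε κ δmin hT hε hκ hmin
  have hB2 := gser_lim T ε κ δmax hT hε hκ (by linarith)
  have hE : Tendsto (fun τ : ℝ => Real.exp (-κ * τ)) (nhdsWithin 0 (Ioi 0)) (nhds 1) := by
    have : Tendsto (fun τ : ℝ => Real.exp (-κ * τ)) (nhds 0) (nhds (Real.exp (-κ * 0))) :=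
      (Real.continuous_exp.comp (continuous_const.mul continuous_id)).tendsto 0
    simpa using this.mono_left nhdsWithin_le_nhds
  -- combine
  have hcomb : Tendsto (fun τ =>
      (L δmin - L δmax) + ε * p₀ / (κ * τ) * (1 - Real.exp (-κ * τ))
        - (ε / (κ * τ) * Gser T ε κ τ δmin
            - Real.exp (-κ * τ) * (ε / (κ * τ) * Gser T ε κ τ δmax)))
      (nhdsWithin 0 (Ioi 0))
      (nhds ((L δmin - L δmax) + ε * p₀ - (L δmin - 1 * L δmax))) :=
    (tendsto_const_nhds.add hA).sub (hB1.sub (hE.mul hB2))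
  have hval : (L δmin - L δmax) + ε * p₀ - (L δmin - 1 * L δmax) = ε * p₀ := by ring
  rw [hval] at hcomb
  refine hcomb.congr' ?_
  filter_upwards [self_mem_nhdsWithin] with τ hτ
  have hτ0 : (0:ℝ) < τ := hτ
  have hz1 : (0:ℝ) < 1 + Real.exp (-δmin / T) := by positivity
  have hz2 : (0:ℝ) < 1 + Real.exp (-δmax / T) := by positivity
  have hlog : T * Real.log ((1 + Real.exp (-δmin / T)) / (1 + Real.exp (-δmax / T)))
      = L δmin - L δmax := by
    rw [hL]
    rw [Real.log_div (ne_of_gt hz1) (ne_of_gt hz2)]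
    ring
  rw [Mavg, hlog, ← hεdef]
  ring
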